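/- Let F : ℝⁿ → [0,∞) be a reversible Minkowski norm (C² away from 0, absolutely homogeneous, with positive definite Hessian g_y of F²/2 for y ≠ 0), inducing the distance d_F(p,q) = F(q - p). Let S₁, S₂ ⊆ ℝⁿ be closed convex sets, q ∈ S₁, and q̃ ∈ S₂. If g_{q̃-q}(q̃ - q, z₁ - q) ≤ 0 for all z₁ ∈ S₁ and g_{q̃-q}(q - q̃, z₂ - q̃) ≤ 0 for all z₂ ∈ S₂ (i.e., q = P_{S₁}(q̃) and q̃ = P_{S₂}(q)), then F(q̃ - q) ≤ F(z₂ - z₁) for all z₁ ∈ S₁ and z₂ ∈ S₂. -/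

import Mathlib

open Set

section Aux

variable {E : Type*} [NormedAddCommGroup E] [NormedSpace ℝ E]

lemma aux_fderiv_apply (φ : E → ℝ) {y : E} (hA : DifferentiableAt ℝ (fderiv ℝ φ) y)
    (v w : E) :
    fderiv ℝ (fun z => fderiv ℝ φ z v) y w = fderiv ℝ (fderiv ℝ φ) y w v := by
  have h : HasFDerivAt (fun z => fderiv ℝ φ z v)
      ((ContinuousLinearMap.apply ℝ ℝ v).comp (fderiv ℝ (fderiv ℝ φ) y)) y :=
    (ContinuousLinearMap.apply ℝ ℝ v).hasFDerivAt.comp y hA.hasFDerivAt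
  rw [h.fderiv]; rfl

lemma aux_grad_ineq (φ : E → ℝ)
    (hφ : ∀ x : E, x ≠ 0 → DifferentiableAt ℝ φ x)
    (hA : ∀ x : E, x ≠ 0 → DifferentiableAt ℝ (fderiv ℝ φ) x)
    (hess : ∀ x : E, x ≠ 0 → ∀ w, 0 ≤ fderiv ℝ (fderiv ℝ φ) x w w)
    (y u : E) (hseg : ∀ t ∈ Icc (0:ℝ) 1, y + t • (u - y) ≠ 0) :
    fderiv ℝ φ y (u - y) ≤ φ u - φ y := by
  set w := u - y with hw
  set c : ℝ → E := fun t => y + t • w with hc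
  have hcd : ∀ t : ℝ, HasDerivAt c w t := by
    intro t
    simpa [hc] using ((hasDerivAt_id t).smul_const w).const_add y
  set f' : ℝ → ℝ := fun t => fderiv ℝ φ (c t) w with hf'def
  have hf : ∀ t : ℝ, c t ≠ 0 → HasDerivAt (fun t => φ (c t)) (f' t) t := fun t ht =>
    (hφ _ ht).hasFDerivAt.comp_hasDerivAt t (hcd t)
  have hf' : ∀ t : ℝ, c t ≠ 0 → HasDerivAt f' (fderiv ℝ (fderiv ℝ φ) (c t) w w) t := by
    intro t ht
    have h1 : HasFDerivAt (fun z => fderiv ℝ φ z w)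
        ((ContinuousLinearMap.apply ℝ ℝ w).comp (fderiv ℝ (fderiv ℝ φ) (c t))) (c t) :=
      (ContinuousLinearMap.apply ℝ ℝ w).hasFDerivAt.comp _ (hA _ ht).hasFDerivAt
    exact h1.comp_hasDerivAt t (hcd t)
  have hfc : ContinuousOn (fun t => φ (c t)) (Icc 0 1) := fun t ht =>
    ((hf t (hseg t ht)).continuousAt).continuousWithinAt
  have hfc' : ContinuousOn f' (Icc 0 1) := fun t ht =>
    ((hf' t (hseg t ht)).continuousAt).continuousWithinAt
  have hmono : MonotoneOn f' (Icc 0 1) := by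
    apply monotoneOn_of_deriv_nonneg (convex_Icc 0 1) hfc'
    · intro t ht
      rw [interior_Icc] at ht
      exact ((hf' t (hseg t (Ioo_subset_Icc_self ht))).differentiableAt).differentiableWithinAt
    · intro t ht
      rw [interior_Icc] at ht
      rw [(hf' t (hseg t (Ioo_subset_Icc_self ht))).deriv]
      exact hess _ (hseg t (Ioo_subset_Icc_self ht)) w
  obtain ⟨ξ, hξ, hξeq⟩ := exists_hasDerivAt_eq_slope (fun t => φ (c t)) f' one_pos hfc
      (fun t ht => hf t (hseg t (Ioo_subset_Icc_self ht)))
  have h0 : f' 0 ≤ f' ξ := hmono (left_mem_Icc.mpr zero_le_one) (Ioo_subset_Icc_self hξ) hξ.1.le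
  have hc0 : c 0 = y := by simp [hc]
  have hc1 : c 1 = u := by simp [hc, hw]
  have hf'0 : f' 0 = fderiv ℝ φ y (u - y) := by rw [hf'def]; simp [hc0, hw]
  have hval : f' ξ = φ u - φ y := by
    rw [hξeq]; simp [hc0, hc1]
  linarith [h0, hf'0 ▸ h0]

end Aux

theorem minkowski_double_projection
    {n : ℕ} (F : EuclideanSpace ℝ (Fin n) → ℝ)
    (g : EuclideanSpace ℝ (Fin n) → EuclideanSpace ℝ (Fin n) → EuclideanSpace ℝ (Fin n) → ℝ)
    (hF_nonneg : ∀ y, 0 ≤ F y)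
    (hF_smooth : ContDiffOn ℝ 2 F {(0 : EuclideanSpace ℝ (Fin n))}ᶜ)
    (hF_homog : ∀ t : ℝ, ∀ y, F (t • y) = |t| * F y)
    (hg_def : ∀ y ≠ 0, ∀ v w,
      g y v w = fderiv ℝ (fun z => fderiv ℝ (fun u => F u ^ 2 / 2) z v) y w)
    (hg_posdef : ∀ y ≠ 0, ∀ v ≠ 0, 0 < g y v v)
    (S₁ S₂ : Set (EuclideanSpace ℝ (Fin n)))
    (hS₁ : IsClosed S₁) (hS₂ : IsClosed S₂)
    (hc₁ : Convex ℝ S₁) (hc₂ : Convex ℝ S₂)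
    (q qt : EuclideanSpace ℝ (Fin n)) (hq : q ∈ S₁) (hqt : qt ∈ S₂) (hne : qt ≠ q)
    (hproj₁ : ∀ z₁ ∈ S₁, g (qt - q) (qt - q) (z₁ - q) ≤ 0)
    (hproj₂ : ∀ z₂ ∈ S₂, g (qt - q) (q - qt) (z₂ - qt) ≤ 0) :
    ∀ z₁ ∈ S₁, ∀ z₂ ∈ S₂, F (qt - q) ≤ F (z₂ - z₁) := by
  intro z₁ hz₁ z₂ hz₂
  set φ : EuclideanSpace ℝ (Fin n) → ℝ := fun u => F u ^ 2 / 2 with hφdef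
  have hφC2 : ContDiffOn ℝ 2 φ {(0 : EuclideanSpace ℝ (Fin n))}ᶜ :=
    (hF_smooth.pow 2).div_const 2
  have hopen : IsOpen ({(0 : EuclideanSpace ℝ (Fin n))}ᶜ) := isOpen_compl_singleton
  have hφdiff : ∀ x : EuclideanSpace ℝ (Fin n), x ≠ 0 → DifferentiableAt ℝ φ x := fun x hx =>
    (hφC2.contDiffAt (hopen.mem_nhds hx)).differentiableAt two_ne_zero
  have hAdiff : ∀ x : EuclideanSpace ℝ (Fin n), x ≠ 0 →
      DifferentiableAt ℝ (fderiv ℝ φ) x := fun x hx =>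
    ((hφC2.contDiffAt (hopen.mem_nhds hx)).fderiv_right (m := 1) (by norm_num)).differentiableAt one_ne_zero
  -- g equals the second derivative
  have hg : ∀ y, y ≠ 0 → ∀ v w, g y v w = fderiv ℝ (fderiv ℝ φ) y w v := by
    intro y hy v w
    rw [hg_def y hy v w]
    exact aux_fderiv_apply φ (hAdiff y hy) v w
  -- symmetry of the second derivative
  have hsymm : ∀ y, y ≠ 0 → ∀ v w,
      fderiv ℝ (fderiv ℝ φ) y v w = fderiv ℝ (fderiv ℝ φ) y w v := by
    intro y hy v w
    refine second_derivative_symmetric_of_eventually (f := φ) ?_ (hAdiff y hy).hasFDerivAt v w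
    filter_upwards [hopen.mem_nhds hy] with z hz using (hφdiff z hz).hasFDerivAt
  -- homogeneity of φ
  have hφhom : ∀ (t : ℝ) (x : EuclideanSpace ℝ (Fin n)), φ (t • x) = t ^ 2 * φ x := by
    intro t x
    simp only [hφdef, hF_homog t x, mul_pow, sq_abs]
    ring
  -- homogeneity of the first derivative
  have hAhom : ∀ (t : ℝ), t ≠ 0 → ∀ x : EuclideanSpace ℝ (Fin n), x ≠ 0 →
      fderiv ℝ φ (t • x) = t • fderiv ℝ φ x := by
    intro t ht x hx
    have htx : t • x ≠ 0 := smul_ne_zero ht hx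
    have hmap : HasFDerivAt (fun z : EuclideanSpace ℝ (Fin n) => t • z)
        (t • (ContinuousLinearMap.id ℝ (EuclideanSpace ℝ (Fin n)))) x :=
      by exact (hasFDerivAt_id x).const_smul t
    have h1 : HasFDerivAt (fun z => φ (t • z))
        ((fderiv ℝ φ (t • x)).comp (t • (ContinuousLinearMap.id ℝ _))) x :=
      (hφdiff _ htx).hasFDerivAt.comp x hmap
    have h2 : HasFDerivAt (fun z => φ (t • z)) (t ^ 2 • fderiv ℝ φ x) x := by
      have heq : (fun z : EuclideanSpace ℝ (Fin n) => φ (t • z)) = fun z => t ^ 2 * φ z :=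
        funext fun z => hφhom t z
      rw [heq]
      simpa [smul_eq_mul] using (hφdiff x hx).hasFDerivAt.const_mul (t ^ 2)
    have huniq := h1.unique h2
    ext v
    have := congrArg (fun (L : EuclideanSpace ℝ (Fin n) →L[ℝ] ℝ) => L v) huniq
    simp only [ContinuousLinearMap.coe_comp', Function.comp_apply,
      ContinuousLinearMap.smul_apply, ContinuousLinearMap.coe_id', id_eq] at this ⊢
    have h3 : (fderiv ℝ φ (t • x)) (t • v) = t ^ 2 * (fderiv ℝ φ x) v := this
    rw [map_smul] at h3
    have := mul_left_cancel₀ ht (by rw [smul_eq_mul] at h3; linarith [h3] :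
      t * (fderiv ℝ φ (t • x)) v = t * (t * (fderiv ℝ φ x) v))
    simpa [smul_eq_mul] using this
  -- Euler identity for the derivative map: D(fderiv φ)(y) y = fderiv φ y
  have hEulerA : ∀ x : EuclideanSpace ℝ (Fin n), x ≠ 0 →
      fderiv ℝ (fderiv ℝ φ) x x = fderiv ℝ φ x := by
    intro x hx
    have hcurve : HasDerivAt (fun s : ℝ => (1 + s) • x) x 0 := by
      simpa using (((hasDerivAt_id (0:ℝ)).const_add 1).smul_const x)
    have hc0 : ((1:ℝ) + 0) • x = x := by norm_num
    have h1 : HasDerivAt (fun s : ℝ => fderiv ℝ φ ((1 + s) • x))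
        (fderiv ℝ (fderiv ℝ φ) x x) 0 := by
      have hAx := (hAdiff x hx).hasFDerivAt
      rw [← hc0] at hAx
      have := hAx.comp_hasDerivAt 0 hcurve
      simpa [hc0, Function.comp_def] using this
    have h2 : HasDerivAt (fun s : ℝ => fderiv ℝ φ ((1 + s) • x)) (fderiv ℝ φ x) 0 := by
      have hne' : ∀ᶠ s : ℝ in nhds 0, (1:ℝ) + s ≠ 0 := by
        have : ContinuousAt (fun s : ℝ => (1:ℝ) + s) 0 := by fun_prop
        exact this.eventually_ne (by norm_num)
      have heq : (fun s : ℝ => (1 + s) • fderiv ℝ φ x) =ᶠ[nhds (0:ℝ)]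
          (fun s : ℝ => fderiv ℝ φ ((1 + s) • x)) := by
        filter_upwards [hne'] with s hs
        exact (hAhom (1 + s) hs x hx).symm
      have hbase : HasDerivAt (fun s : ℝ => (1 + s) • fderiv ℝ φ x) (fderiv ℝ φ x) 0 := by
        simpa using (((hasDerivAt_id (0:ℝ)).const_add 1).smul_const (fderiv ℝ φ x))
      exact hbase.congr_of_eventuallyEq heq.symm
    exact h1.unique h2
  -- Euler identity for φ itself: fderiv φ x x = 2 φ x = F x ^ 2
  have hEulerφ : ∀ x : EuclideanSpace ℝ (Fin n), x ≠ 0 → fderiv ℝ φ x x = F x ^ 2 := by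
    intro x hx
    have hcurve : HasDerivAt (fun s : ℝ => (1 + s) • x) x 0 := by
      simpa using (((hasDerivAt_id (0:ℝ)).const_add 1).smul_const x)
    have hc0 : ((1:ℝ) + 0) • x = x := by norm_num
    have h1 : HasDerivAt (fun s : ℝ => φ ((1 + s) • x)) (fderiv ℝ φ x x) 0 := by
      have hφx := (hφdiff x hx).hasFDerivAt
      rw [← hc0] at hφx
      have := hφx.comp_hasDerivAt 0 hcurve
      simpa [hc0, Function.comp_def] using this
    have h2 : HasDerivAt (fun s : ℝ => φ ((1 + s) • x)) (2 * φ x) 0 := by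
      have heq : (fun s : ℝ => φ ((1 + s) • x)) = fun s : ℝ => (1 + s) ^ 2 * φ x :=
        funext fun s => hφhom (1 + s) x
      rw [heq]
      have : HasDerivAt (fun s : ℝ => (1 + s) ^ 2) (2 * (1 + (0:ℝ))) 0 := by
        simpa [Pi.pow_def] using (((hasDerivAt_id (0:ℝ)).const_add 1).pow 2)
      simpa using this.mul_const (φ x)
    have := h1.unique h2
    rw [this, hφdef]
    ring
  -- positivity of F away from 0
  have hFpos : ∀ x : EuclideanSpace ℝ (Fin n), x ≠ 0 → 0 < F x := by
    intro x hx
    have h := hg_posdef x hx x hx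
    rw [hg x hx x x, hEulerA x hx, hEulerφ x hx] at h
    rcases (hF_nonneg x).lt_or_eq with h' | h'
    · exact h'
    · exfalso; rw [← h'] at h; simp at h
  set y : EuclideanSpace ℝ (Fin n) := qt - q with hydef
  have hy : y ≠ 0 := sub_ne_zero.mpr hne
  -- the key linear functional identity: g y y w = fderiv φ y w
  have hgyy : ∀ w, g y y w = fderiv ℝ φ y w := by
    intro w
    rw [hg y hy y w, ← hsymm y hy, hEulerA y hy]
  -- Hessian nonnegativity
  have hess : ∀ x : EuclideanSpace ℝ (Fin n), x ≠ 0 → ∀ w,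
      0 ≤ fderiv ℝ (fderiv ℝ φ) x w w := by
    intro x hx w
    rcases eq_or_ne w 0 with rfl | hw
    · simp
    · exact le_of_lt ((hg x hx w w) ▸ hg_posdef x hx w hw)
  -- fundamental inequality: fderiv φ y u ≤ F y * F u
  have hfund : ∀ u, fderiv ℝ φ y u ≤ F y * F u := by
    intro u
    by_cases hcol : ∃ c : ℝ, u = c • y
    · obtain ⟨c, rfl⟩ := hcol
      rw [map_smul, smul_eq_mul, hEulerφ y hy, hF_homog c y]
      nlinarith [le_abs_self c, sq_nonneg (F y), hF_nonneg y, abs_nonneg c]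
    · have hu0 : u ≠ 0 := by rintro rfl; exact hcol ⟨0, by simp⟩
      have hFu : 0 < F u := hFpos u hu0
      have hFy : 0 < F y := hFpos y hy
      set s : ℝ := F y / F u with hs
      have hspos : 0 < s := div_pos hFy hFu
      have hseg : ∀ t ∈ Icc (0:ℝ) 1, y + t • (s • u - y) ≠ 0 := by
        intro t ht h0
        rcases eq_or_ne t 0 with rfl | ht0
        · simp at h0; exact hy h0
        · apply hcol
          have hts : t * s ≠ 0 := mul_ne_zero ht0 (ne_of_gt hspos)
          have hkey : (t * s) • u = (t - 1) • y := by
            have h0' : y + (t • (s • u) - t • y) = 0 := by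
              rw [← smul_sub]; exact h0
            rw [smul_smul] at h0'
            linear_combination (norm := module) h0'
          refine ⟨(t - 1) / (t * s), ?_⟩
          calc u = (t * s)⁻¹ • ((t * s) • u) := by
                rw [smul_smul, inv_mul_cancel₀ hts, one_smul]
            _ = (t * s)⁻¹ • ((t - 1) • y) := by rw [hkey]
            _ = ((t - 1) / (t * s)) • y := by rw [smul_smul, div_eq_inv_mul, mul_comm]
      have hgi := aux_grad_ineq φ hφdiff hAdiff hess y (s • u) hseg
      have h1 : fderiv ℝ φ y (s • u - y) = s * fderiv ℝ φ y u - F y ^ 2 := by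
        rw [map_sub, map_smul, smul_eq_mul, hEulerφ y hy]
      have h2 : φ (s • u) = F y ^ 2 / 2 := by
        rw [hφhom s u]
        have : φ u = F u ^ 2 / 2 := rfl
        rw [this, hs]
        field_simp
      have h3 : φ y = F y ^ 2 / 2 := rfl
      rw [h1, h2, h3] at hgi
      -- hgi : s * fderiv φ y u - F y ^ 2 ≤ 0, with s = F y / F u
      have hmul : F y * fderiv ℝ φ y u ≤ F y ^ 2 * F u := by
        have := mul_le_mul_of_nonneg_left (by linarith : s * fderiv ℝ φ y u ≤ F y ^ 2) hFu.le
        calc F y * fderiv ℝ φ y u = F u * (s * fderiv ℝ φ y u) := by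
              rw [hs]; field_simp
          _ ≤ F u * F y ^ 2 := this
          _ = F y ^ 2 * F u := by ring
      nlinarith [hmul, hFy]
  -- rewrite the projection hypotheses
  have h1 : fderiv ℝ φ y (z₁ - q) ≤ 0 := by
    have := hproj₁ z₁ hz₁
    rwa [hgyy (z₁ - q)] at this
  have h2 : 0 ≤ fderiv ℝ φ y (z₂ - qt) := by
    have h := hproj₂ z₂ hz₂
    have e : g y (q - qt) (z₂ - qt) = - fderiv ℝ φ y (z₂ - qt) := by
      have hq' : q - qt = -y := by rw [hydef]; abel
      rw [hg y hy, hq', map_neg, ← hsymm y hy, hEulerA y hy]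
    rw [e] at h
    linarith
  -- combine
  have hdecomp : z₂ - z₁ = (z₂ - qt) + y + -(z₁ - q) := by
    rw [hydef]; abel
  have hkey : F y ^ 2 ≤ fderiv ℝ φ y (z₂ - z₁) := by
    rw [hdecomp, map_add, map_add, map_neg, hEulerφ y hy]
    linarith
  have hfin := hfund (z₂ - z₁)
  have hFy : 0 < F y := hFpos y hy
  nlinarith [hkey, hfin, hFy]
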